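/- One-at-a-time Elimination: For a dominance relation R that is hereditary, the transitive closure of the one-strategy-at-a-time reduction ⇒_{1,R} equals the transitive closure of ⇒_R; i.e., whenever G ⇒_R G', there is a chain of single-strategy eliminations G ⇒_{1,R} G₁ ⇒_{1,R} … ⇒_{1,R} G'. -/

import Mathlib

/-- One-at-a-time Elimination: for a hereditary dominance relation `R`, the transitive
closure of the single-strategy elimination relation `⇒_{1,R}` equals the transitive
closure of `⇒_R`. -/
theorem one_at_a_time_elimination {n : ℕ} {S : Fin n → Type*}
    [∀ i, Fintype (S i)] [∀ i, DecidableEq (S i)]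
    (R : (∀ i, Finset (S i)) → ∀ i, S i → S i → Prop)
    (hher : ∀ T T' : ∀ i, Finset (S i), (∀ i, T' i ⊆ T i) →
      ∀ (i : Fin n) (s s' : S i), s ∈ T' i → s' ∈ T' i → R T i s s' → R T' i s s') :
    Relation.TransGen (fun T T' : ∀ i, Finset (S i) =>
        (T ≠ T' ∧ (∀ i, T' i ⊆ T i) ∧
          (∀ i, ∀ s ∈ T i, s ∉ T' i → ∃ s' ∈ T' i, R T i s s')) ∧
        (∑ i, (T i \ T' i).card) = 1) =
    Relation.TransGen (fun T T' : ∀ i, Finset (S i) =>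
        T ≠ T' ∧ (∀ i, T' i ⊆ T i) ∧
          (∀ i, ∀ s ∈ T i, s ∉ T' i → ∃ s' ∈ T' i, R T i s s')) := by
  funext T₀ T₀'
  apply propext
  constructor
  · intro h
    induction h with
    | single hab => exact Relation.TransGen.single hab.1
    | tail _ hbc ih => exact ih.tail hbc.1
  · have key : ∀ m (T T' : ∀ i, Finset (S i)),
        (∑ i, (T i \ T' i).card) ≤ m →
        (T ≠ T' ∧ (∀ i, T' i ⊆ T i) ∧
          (∀ i, ∀ s ∈ T i, s ∉ T' i → ∃ s' ∈ T' i, R T i s s')) →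
        Relation.TransGen (fun T T' : ∀ i, Finset (S i) =>
          (T ≠ T' ∧ (∀ i, T' i ⊆ T i) ∧
            (∀ i, ∀ s ∈ T i, s ∉ T' i → ∃ s' ∈ T' i, R T i s s')) ∧
          (∑ i, (T i \ T' i).card) = 1) T T' := by
      intro m
      induction m with
      | zero =>
        intro T T' hle ⟨hne, hsub, _⟩
        exfalso
        apply hne
        funext j
        have hsum : (∑ i, (T i \ T' i).card) = 0 := Nat.le_zero.mp hle
        have h0 : (T j \ T' j).card = 0 :=
          (Finset.sum_eq_zero_iff.mp hsum) j (Finset.mem_univ j)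
        have hemp : T j \ T' j = ∅ := Finset.card_eq_zero.mp h0
        refine Finset.Subset.antisymm ?_ (hsub j)
        intro x hx
        by_contra hx'
        exact absurd (Finset.mem_sdiff.mpr ⟨hx, hx'⟩) (by simp [hemp])
      | succ m ih =>
        intro T T' hle ⟨hne, hsub, hdom⟩
        -- find a removed strategy
        have hex : ∃ i, ∃ s, s ∈ T i ∧ s ∉ T' i := by
          by_contra h
          push_neg at h
          apply hne
          funext j
          exact Finset.Subset.antisymm (fun x hx => h j x hx) (hsub j)
        obtain ⟨i, s, hsT, hsT'⟩ := hex
        classical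
        set T'' : ∀ j, Finset (S j) := fun j =>
          if h : j = i then h ▸ (T i \ {s}) else T j with hT''def
        have hT''i : T'' i = T i \ {s} := by simp [hT''def]
        have hT''j : ∀ j, j ≠ i → T'' j = T j := by
          intro j hj; simp [hT''def, hj]
        have hsub'' : ∀ j, T'' j ⊆ T j := by
          intro j
          by_cases hj : j = i
          · subst hj; rw [hT''i]; exact Finset.sdiff_subset
          · rw [hT''j j hj]
        have hsubT'T'' : ∀ j, T' j ⊆ T'' j := by
          intro j
          by_cases hj : j = i
          · subst hj; rw [hT''i]
            intro x hx
            refine Finset.mem_sdiff.mpr ⟨hsub j hx, ?_⟩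
            simp only [Finset.mem_singleton]
            rintro rfl; exact hsT' hx
          · rw [hT''j j hj]; exact hsub j
        have hsnot : s ∉ T'' i := by
          rw [hT''i]; simp
        have hTneT'' : T ≠ T'' := by
          intro h
          rw [← h] at hsnot
          exact hsnot hsT
        -- the one-step elimination T ⇒₁ T''
        have hstep : (T ≠ T'' ∧ (∀ j, T'' j ⊆ T j) ∧
            (∀ j, ∀ t ∈ T j, t ∉ T'' j → ∃ t' ∈ T'' j, R T j t t')) ∧
            (∑ j, (T j \ T'' j).card) = 1 := by
          refine ⟨⟨hTneT'', hsub'', ?_⟩, ?_⟩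
          · intro j t htT htT''
            by_cases hj : j = i
            · subst hj
              have hts : t = s := by
                rw [hT''i] at htT''
                by_contra hts
                exact htT'' (Finset.mem_sdiff.mpr ⟨htT, by simpa using hts⟩)
              subst hts
              obtain ⟨t', ht'T', hR⟩ := hdom j t htT hsT'
              exact ⟨t', hsubT'T'' j ht'T', hR⟩
            · rw [hT''j j hj] at htT''
              exact absurd htT htT''
          · have hpt : ∀ j, (T j \ T'' j).card = if j = i then 1 else 0 := by
              intro j
              by_cases hj : j = i
              · subst hj
                rw [hT''i, Finset.sdiff_sdiff_self_left,
                  Finset.inter_eq_right.mpr (by simpa using hsT)]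
                simp
              · rw [hT''j j hj]; simp [hj]
            simp [hpt]
        -- counting: sum for (T'', T') is one less
        have hcount : (∑ j, (T j \ T' j).card) = (∑ j, (T'' j \ T' j).card) + 1 := by
          have hpt : ∀ j, (T j \ T' j).card
              = (T'' j \ T' j).card + (if j = i then 1 else 0) := by
            intro j
            by_cases hj : j = i
            · subst hj
              rw [hT''i]
              have heq : T'' j \ T' j = (T j \ T' j).erase s := by
                rw [hT''i]
                ext x
                simp only [Finset.mem_sdiff, Finset.mem_erase, Finset.mem_singleton]
                tauto
              rw [hT''i] at heq
              rw [heq, Finset.card_erase_of_mem (Finset.mem_sdiff.mpr ⟨hsT, hsT'⟩)]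
              have : 1 ≤ (T j \ T' j).card :=
                Finset.card_pos.mpr ⟨s, Finset.mem_sdiff.mpr ⟨hsT, hsT'⟩⟩
              simp only [if_true, eq_self_iff_true, ite_true]
              omega
            · rw [hT''j j hj]; simp [hj]
          rw [Finset.sum_congr rfl (fun j _ => hpt j), Finset.sum_add_distrib]
          simp
        by_cases hfin : T'' = T'
        · rw [hfin] at hstep
          exact Relation.TransGen.single hstep
        · refine Relation.TransGen.head hstep (ih T'' T' ?_ ⟨hfin, hsubT'T'', ?_⟩)
          · omega
          · intro j t htT'' htT'
            obtain ⟨t', ht'T', hR⟩ := hdom j t (hsub'' j htT'') htT'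
            exact ⟨t', ht'T', hher T T'' hsub'' j t t' htT'' (hsubT'T'' j ht'T') hR⟩
    intro h
    induction h with
    | single hab => exact key _ _ _ le_rfl hab
    | tail _ hbc ih => exact ih.trans (key _ _ _ le_rfl hbc)
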